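/- (§6.1) Let A be a finite set of nonzero vectors spanning a complex vector space V. For v ∈ V put A_v = {ω ∈ A : ω + v ∈ A ∪ {0}}, B_v = A ∖ A_v, and let L_v be the linear span of B_v; call v consistent with A if L_v is a proper subspace of V. Then for every nonzero vector v that is consistent with A: (i) L_v has codimension 1 in V; (ii) v ∉ A; (iii) v ∉ L_v; and (iv) A_v ∩ L_v = ∅. -/

import Mathlib

/-- §6.1: let `A` be a finite set of nonzero vectors spanning `V`, and for `v ∈ V` put
`A_v = {ω ∈ A : ω + v ∈ A ∪ {0}}`, `B_v = A ∖ A_v`, `L_v = span B_v`; `v` is consistent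
with `A` if `L_v ≠ V`.  Then for every nonzero consistent `v`: (i) `L_v` has codimension 1;
(ii) `v ∉ A`; (iii) `v ∉ L_v`; (iv) `A_v ∩ L_v = ∅`. -/
theorem stmt16 {V : Type*} [AddCommGroup V] [Module ℂ V] [DecidableEq V]
    (A : Finset V) (hA0 : ∀ ω ∈ A, ω ≠ (0 : V))
    (hspan : Submodule.span ℂ (A : Set V) = ⊤)
    (v : V) (hv : v ≠ 0)
    (hcons : Submodule.span ℂ
      (((A \ A.filter (fun ω => ω + v ∈ insert (0 : V) A)) : Finset V) : Set V) ≠ ⊤) :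
    Module.finrank ℂ
        (V ⧸ Submodule.span ℂ
          (((A \ A.filter (fun ω => ω + v ∈ insert (0 : V) A)) : Finset V) : Set V)) = 1 ∧
      v ∉ A ∧
      v ∉ Submodule.span ℂ
        (((A \ A.filter (fun ω => ω + v ∈ insert (0 : V) A)) : Finset V) : Set V) ∧
      ∀ ω ∈ A.filter (fun ω => ω + v ∈ insert (0 : V) A),
        ω ∉ Submodule.span ℂ
          (((A \ A.filter (fun ω => ω + v ∈ insert (0 : V) A)) : Finset V) : Set V) := by
  classical
  set P := A.filter (fun ω => ω + v ∈ insert (0 : V) A) with hP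
  set B := A \ P with hB
  set L := Submodule.span ℂ ((B : Finset V) : Set V) with hL
  -- chain lemma
  have hchain : ∀ ω ∈ A, ∃ k : ℕ, ω + (k : ℂ) • v ∈ A ∧
      (ω + ((k : ℂ) + 1) • v = 0 ∨ ω + (k : ℂ) • v ∈ B) := by
    intro ω hω
    have hinj : Function.Injective (fun k : ℕ => ω + (k : ℂ) • v) := by
      intro a b hab
      simp only [add_right_inj] at hab
      exact_mod_cast smul_left_injective ℂ hv hab
    have hSfin : {k : ℕ | ω + (k : ℂ) • v ∈ A}.Finite := by
      have : {k : ℕ | ω + (k : ℂ) • v ∈ A} =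
          (fun k : ℕ => ω + (k : ℂ) • v) ⁻¹' (A : Set V) := rfl
      rw [this]
      exact Set.Finite.preimage hinj.injOn A.finite_toSet
    obtain ⟨k, hk, hmax⟩ := Set.Finite.exists_maximalFor id _ hSfin ⟨0, by simpa using hω⟩
    refine ⟨k, hk, ?_⟩
    have hk1 : ω + ((k : ℂ) + 1) • v ∉ A := by
      intro h
      have : (k + 1 : ℕ) ∈ {k : ℕ | ω + (k : ℂ) • v ∈ A} := by
        simpa [Nat.cast_add, Nat.cast_one] using h
      have h' := hmax this (Nat.le_succ k)
      simp only [id] at h'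
      omega
    have heq : ω + ((k : ℂ) + 1) • v = ω + (k : ℂ) • v + v := by module
    by_cases hPk : ω + (k : ℂ) • v ∈ P
    · rw [hP, Finset.mem_filter] at hPk
      rcases Finset.mem_insert.1 hPk.2 with h0 | hA'
      · left; rw [heq]; exact h0
      · exact absurd (show ω + ((k : ℂ) + 1) • v ∈ A by rw [heq]; exact hA') hk1
    · right
      rw [hB, Finset.mem_sdiff]
      exact ⟨hk, hPk⟩
  -- every element of A is in L ⊔ ℂ∙v
  have htop : L ⊔ (ℂ ∙ v) = ⊤ := by
    rw [eq_top_iff, ← hspan, Submodule.span_le]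
    intro ω hω
    obtain ⟨k, hkA, hcase⟩ := hchain ω hω
    rcases hcase with h0 | hBk
    · have : ω = -(((k : ℂ) + 1) • v) := by linear_combination (norm := module) h0
      rw [this]
      exact Submodule.mem_sup_right (Submodule.neg_mem _
        (Submodule.smul_mem _ _ (Submodule.mem_span_singleton_self v)))
    · have h1 : ω + (k : ℂ) • v ∈ L := Submodule.subset_span (by exact_mod_cast hBk)
      have : ω = (ω + (k : ℂ) • v) - (k : ℂ) • v := by module
      rw [this]
      exact Submodule.sub_mem _ (Submodule.mem_sup_left h1)
        (Submodule.mem_sup_right (Submodule.smul_mem _ _ (Submodule.mem_span_singleton_self v)))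
  -- (iii) v ∉ L
  have hvL : v ∉ L := by
    intro h
    apply hcons
    rw [← hL] at *
    rw [← htop, sup_eq_left.2 ((Submodule.span_singleton_le_iff_mem v L).2 h)]
  -- (ii) v ∉ A
  have hvA : v ∉ A := by
    intro h
    obtain ⟨k, hkA, hcase⟩ := hchain v h
    have hk1 : v + (k : ℂ) • v = ((k : ℂ) + 1) • v := by module
    rcases hcase with h0 | hBk
    · have : ((k : ℂ) + 2) • v = 0 := by linear_combination (norm := module) h0
      have h2 : ((k : ℂ) + 2) ≠ 0 := by
        have : ((k + 2 : ℕ) : ℂ) ≠ 0 := Nat.cast_ne_zero.2 (by omega)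
        push_cast at this; exact this
      exact hv (by simpa [smul_eq_zero, h2] using this)
    · have hmem : ((k : ℂ) + 1) • v ∈ L := by
        rw [← hk1]; exact Submodule.subset_span (by exact_mod_cast hBk)
      have h2 : ((k : ℂ) + 1) ≠ 0 := by
        have : ((k + 1 : ℕ) : ℂ) ≠ 0 := Nat.cast_ne_zero.2 (by omega)
        push_cast at this; exact this
      apply hvL
      have := Submodule.smul_mem L ((k : ℂ) + 1)⁻¹ hmem
      rwa [inv_smul_smul₀ h2] at this
  -- (iv)
  have hiv : ∀ ω ∈ P, ω ∉ L := by
    intro ω hωP hωL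
    have hωA : ω ∈ A := (Finset.mem_filter.1 hωP).1
    obtain ⟨k, hkA, hcase⟩ := hchain ω hωA
    rcases hcase with h0 | hBk
    · -- v = -(1/(k+1)) • ω ∈ L
      have h2 : ((k : ℂ) + 1) ≠ 0 := by
        have : ((k + 1 : ℕ) : ℂ) ≠ 0 := Nat.cast_ne_zero.2 (by omega)
        push_cast at this; exact this
      apply hvL
      have hveq : v = (-(((k : ℂ) + 1)⁻¹)) • ω := by
        have h3 : ((k : ℂ) + 1) • v = -ω := by linear_combination (norm := module) h0
        have h4 := congrArg (fun x => (((k : ℂ) + 1)⁻¹) • x) h3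
        simp only [inv_smul_smul₀ h2, smul_neg] at h4
        rw [h4, neg_smul]
      rw [hveq]
      exact Submodule.smul_mem _ _ hωL
    · -- ω + k•v ∈ L and ω ∈ L, so k•v ∈ L; k ≠ 0 since ω ∈ P
      have hmem : ω + (k : ℂ) • v ∈ L := Submodule.subset_span (by exact_mod_cast hBk)
      have hkv : (k : ℂ) • v ∈ L := by
        have := Submodule.sub_mem _ hmem hωL
        simpa using this
      have hk0 : k ≠ 0 := by
        rintro rfl
        rw [hB, Finset.mem_sdiff] at hBk
        simp only [Nat.cast_zero, zero_smul, add_zero] at hBk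
        exact hBk.2 hωP
      have h2 : (k : ℂ) ≠ 0 := Nat.cast_ne_zero.2 hk0
      apply hvL
      have := Submodule.smul_mem L ((k : ℂ))⁻¹ hkv
      rwa [inv_smul_smul₀ h2] at this
  -- (i) finrank quotient = 1
  have hfin : Module.finrank ℂ (V ⧸ L) = 1 := by
    apply finrank_eq_one (L.mkQ v)
    · simpa [Submodule.mkQ_apply, Submodule.Quotient.mk_eq_zero] using hvL
    · intro w
      obtain ⟨x, rfl⟩ := Submodule.mkQ_surjective L w
      have hx : x ∈ L ⊔ (ℂ ∙ v) := by rw [htop]; trivial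
      obtain ⟨l, hl, y, hy, rfl⟩ := Submodule.mem_sup.1 hx
      obtain ⟨c, rfl⟩ := Submodule.mem_span_singleton.1 hy
      refine ⟨c, ?_⟩
      simp [Submodule.Quotient.mk_add, (Submodule.Quotient.mk_eq_zero L).2 hl]
  exact ⟨hfin, hvA, hvL, hiv⟩
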